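/- Let $\varphi \in C^{n+2}(\mathbb{R}^2)$ and let the stencil $(f_{ij})_{j}$ for particle $i$ satisfy the moment conditions: $\sum_j f_{ij} r_{ij}^\alpha = 0$ for all multi-indices $0 \leq |\alpha| \leq n+1$ with $|\alpha| \neq 2$, and $\sum_j f_{ij} (r_{ij}^x)^2 = 2$, $\sum_j f_{ij}(r_{ij}^y)^2 = 2$, $\sum_j f_{ij} r_{ij}^x r_{ij}^y = 0$, where $r_{ij} = x_j - x_i$. Assume $f_{ij} \geq 0$ for $j \neq i$ and $rh \leq |r_{ij}| \leq Rh$ whenever $j \neq i$ and $f_{ij} \neq 0$. Then $\left| \Delta\varphi(x_i) - \sum_j f_{ij}\varphi(x_j) \right| \leq 4 C_\alpha \frac{(Rh)^{n+2}}{(rh)^2} \max_{|\beta| = n+2} \|D^\beta \varphi\|_\infty$, where $C_\alpha = \sum_{|\beta| = n+2} 1/\beta!$. -/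

import Mathlib

/-- Mixed partial derivative `D^(a,b) φ` of a function on `ℝ²`, taken `a` times
in the first variable and `b` times in the second. -/
noncomputable def pd (a b : ℕ) (φ : ℝ × ℝ → ℝ) : ℝ × ℝ → ℝ :=
  fun p => iteratedDeriv a (fun s => iteratedDeriv b (fun t => φ (s, t)) p.2) p.1

open Set Finset
namespace S10
noncomputable def Dv (w : ℝ × ℝ) (φ : ℝ × ℝ → ℝ) : ℝ × ℝ → ℝ := fun p => fderiv ℝ φ p w

lemma contDiff_Dv {m : ℕ} {φ : ℝ × ℝ → ℝ} (hφ : ContDiff ℝ ((m + 1 : ℕ) : ℕ∞) φ) (w : ℝ × ℝ) :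
    ContDiff ℝ (m : ℕ∞) (Dv w φ) := by
  have h : ContDiff ℝ (m : ℕ∞) (fderiv ℝ φ) := hφ.fderiv_right (by push_cast; exact le_refl _)
  exact (ContinuousLinearMap.apply ℝ ℝ w).contDiff.comp h

lemma clairaut {φ : ℝ × ℝ → ℝ} (hφ : ContDiff ℝ 2 φ) (v w : ℝ × ℝ) :
    Dv v (Dv w φ) = Dv w (Dv v φ) := by
  funext p
  have hd : ∀ y, HasFDerivAt φ (fderiv ℝ φ y) y := fun y =>
    ((hφ.differentiable (by norm_num)) y).hasFDerivAt
  have h1 : ContDiff ℝ 1 (fderiv ℝ φ) := hφ.fderiv_right (by norm_num)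
  have hd2 : HasFDerivAt (fderiv ℝ φ) (fderiv ℝ (fderiv ℝ φ) p) p :=
    ((h1.differentiable (by norm_num)) p).hasFDerivAt
  have key : ∀ c u : ℝ × ℝ, Dv c (Dv u φ) p = fderiv ℝ (fderiv ℝ φ) p c u := by
    intro c u
    have h3 : HasFDerivAt (fun z => fderiv ℝ φ z u)
        ((fderiv ℝ φ p).comp (0 : (ℝ×ℝ) →L[ℝ] (ℝ×ℝ)) + ((fderiv ℝ (fderiv ℝ φ) p).flip u)) p :=
      hd2.clm_apply (hasFDerivAt_const u p)
    have h4 : fderiv ℝ (fun z => fderiv ℝ φ z u) p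
        = (fderiv ℝ φ p).comp (0 : (ℝ×ℝ) →L[ℝ] (ℝ×ℝ)) + ((fderiv ℝ (fderiv ℝ φ) p).flip u) :=
      h3.fderiv
    have h5 : Dv u φ = fun z => fderiv ℝ φ z u := rfl
    simp only [Dv, h5, h4]
    simp
  rw [show Dv v (Dv w φ) p = fderiv ℝ (fderiv ℝ φ) p v w from key v w,
    show Dv w (Dv v φ) p = fderiv ℝ (fderiv ℝ φ) p w v from key w v]
  exact second_derivative_symmetric hd hd2 v w


lemma contDiff_iter (w : ℝ × ℝ) : ∀ (k m : ℕ) (φ : ℝ × ℝ → ℝ),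
    ContDiff ℝ ((m + k : ℕ) : ℕ∞) φ → ContDiff ℝ (m : ℕ∞) ((Dv w)^[k] φ) := by
  intro k
  induction k with
  | zero => intro m φ h; simpa using h
  | succ k ih =>
    intro m φ h
    rw [Function.iterate_succ_apply']
    have h' : ContDiff ℝ (((m + 1) + k : ℕ) : ℕ∞) φ := by
      rwa [show m + 1 + k = m + (k + 1) from by ring]
    have := ih (m + 1) φ h'
    have hres : ContDiff ℝ (m : ℕ∞) (fderiv ℝ ((Dv w)^[k] φ)) :=
      this.fderiv_right (by push_cast; exact le_refl _)
    exact (ContinuousLinearMap.apply ℝ ℝ w).contDiff.comp hres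

def e1 : ℝ × ℝ := (1, 0)
def e2 : ℝ × ℝ := (0, 1)

lemma swap_iter : ∀ (a : ℕ) (ψ : ℝ × ℝ → ℝ), ContDiff ℝ ((a + 1 : ℕ) : ℕ∞) ψ →
    Dv e2 ((Dv e1)^[a] ψ) = (Dv e1)^[a] (Dv e2 ψ) := by
  intro a
  induction a with
  | zero => intro ψ _; rfl
  | succ a ih =>
    intro ψ h
    rw [Function.iterate_succ_apply']
    have hχ : ContDiff ℝ (2 : ℕ∞) ((Dv e1)^[a] ψ) := by
      have := contDiff_iter e1 a 2 ψ (h.of_le (by norm_cast; omega))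
      exact_mod_cast this
    rw [clairaut hχ e2 e1]
    have : Dv e2 ((Dv e1)^[a] ψ) = (Dv e1)^[a] (Dv e2 ψ) :=
      ih ψ (h.of_le (by norm_cast; omega))
    rw [this]; exact (Function.iterate_succ_apply' (Dv e1) a (Dv e2 ψ)).symm



lemma Dv_decomp (g : ℝ × ℝ → ℝ) (p w : ℝ × ℝ) :
    Dv w g p = w.1 * Dv e1 g p + w.2 * Dv e2 g p := by
  have hw : w = w.1 • e1 + w.2 • e2 := by
    simp [e1, e2, Prod.ext_iff]
  simp only [Dv]
  conv_lhs => rw [hw]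
  rw [map_add, map_smul, map_smul]
  simp [smul_eq_mul]

lemma expand (w : ℝ × ℝ) : ∀ (k m : ℕ) (φ : ℝ × ℝ → ℝ), k ≤ m → ContDiff ℝ (m : ℕ∞) φ → ∀ p,
    (Dv w)^[k] φ p = ∑ a ∈ Finset.range (k + 1),
      (k.choose a : ℝ) * w.1 ^ a * w.2 ^ (k - a) * (Dv e1)^[a] ((Dv e2)^[k - a] φ) p := by
  intro k
  induction k with
  | zero => intro m φ _ _ p; simp
  | succ k ih =>
    intro m φ hk hφ p
    have hφk : ∀ a b : ℕ, a + b ≤ m → ContDiff ℝ ((m - (a+b) : ℕ) : ℕ∞) ((Dv e1)^[a] ((Dv e2)^[b] φ)) := by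
      intro a b hab
      have h1 : ContDiff ℝ (((m - (a+b)) + a + b : ℕ) : ℕ∞) φ := hφ.of_le (by norm_cast; omega)
      have h2 := contDiff_iter e2 b ((m - (a+b)) + a) φ (by rwa [show m - (a+b) + a + b = m - (a+b) + a + b from rfl] at h1)
      exact contDiff_iter e1 a (m - (a+b)) _ h2
    -- differentiability of each DD a b for a+b = k
    have hdiff : ∀ a b : ℕ, a + b = k → Differentiable ℝ ((Dv e1)^[a] ((Dv e2)^[b] φ)) := by
      intro a b hab
      have := hφk a b (by omega)
      exact this.differentiable (by norm_cast; omega)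
    rw [Function.iterate_succ_apply']
    have hIH : (Dv w)^[k] φ = fun q => ∑ a ∈ Finset.range (k + 1),
        (k.choose a : ℝ) * w.1 ^ a * w.2 ^ (k - a) * (Dv e1)^[a] ((Dv e2)^[k - a] φ) q :=
      funext fun q => ih m φ (by omega) hφ q
    have hstep : Dv w ((Dv w)^[k] φ) p = ∑ a ∈ Finset.range (k + 1),
        (k.choose a : ℝ) * w.1 ^ a * w.2 ^ (k - a) *
          (w.1 * (Dv e1)^[a+1] ((Dv e2)^[k - a] φ) p
            + w.2 * (Dv e1)^[a] ((Dv e2)^[k - a + 1] φ) p) := by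
      rw [hIH]
      simp only [Dv]
      rw [fderiv_fun_sum (fun a ha => by
        exact (((hdiff a (k-a) (by simp at ha; omega)).differentiableAt).const_mul _))]
      rw [ContinuousLinearMap.sum_apply]
      refine Finset.sum_congr rfl fun a ha => ?_
      simp only [Finset.mem_range] at ha
      rw [fderiv_const_mul ((hdiff a (k-a) (by omega)).differentiableAt)]
      rw [ContinuousLinearMap.smul_apply]
      have hdec := Dv_decomp ((Dv e1)^[a] ((Dv e2)^[k - a] φ)) p w
      simp only [Dv] at hdec
      rw [hdec]
      have he1 : fderiv ℝ ((Dv e1)^[a] ((Dv e2)^[k-a] φ)) p e1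
          = (Dv e1)^[a+1] ((Dv e2)^[k - a] φ) p := by
        rw [Function.iterate_succ_apply']; rfl
      have he2 : fderiv ℝ ((Dv e1)^[a] ((Dv e2)^[k-a] φ)) p e2
          = (Dv e1)^[a] ((Dv e2)^[k - a + 1] φ) p := by
        have hs : Dv e2 ((Dv e1)^[a] ((Dv e2)^[k-a] φ)) = (Dv e1)^[a] (Dv e2 ((Dv e2)^[k-a] φ)) := by
          apply swap_iter
          have := hφk 0 (k - a) (by omega)
          simp only [Function.iterate_zero, id_eq] at this
          exact this.of_le (by norm_cast; omega)
        have : Dv e2 ((Dv e1)^[a] ((Dv e2)^[k-a] φ)) p = (Dv e1)^[a] ((Dv e2)^[k - a + 1] φ) p := by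
          rw [hs, show Dv e2 ((Dv e2)^[k-a] φ) = (Dv e2)^[k-a+1] φ from
            (Function.iterate_succ_apply' (Dv e2) (k-a) φ).symm]
        exact this
      rw [he1, he2]
      simp [smul_eq_mul]
    rw [hstep]
    -- Pascal recombination
    set T : ℕ → ℕ → ℝ := fun a b => (Dv e1)^[a] ((Dv e2)^[b] φ) p with hT
    have lhs_split : ∑ a ∈ Finset.range (k + 1),
        (k.choose a : ℝ) * w.1 ^ a * w.2 ^ (k - a) *
          (w.1 * T (a+1) (k-a) + w.2 * T a (k - a + 1))
        = (∑ a ∈ Finset.range (k + 1), (k.choose a : ℝ) * w.1 ^ (a+1) * w.2 ^ (k - a) * T (a+1) (k-a))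
          + ∑ a ∈ Finset.range (k + 1), (k.choose a : ℝ) * w.1 ^ a * w.2 ^ (k - a + 1) * T a (k - a + 1) := by
      rw [← Finset.sum_add_distrib]
      exact Finset.sum_congr rfl fun a _ => by ring
    rw [lhs_split]
    have rhs_split : ∑ a ∈ Finset.range (k + 2),
        ((k+1).choose a : ℝ) * w.1 ^ a * w.2 ^ (k + 1 - a) * T a (k + 1 - a)
        = (∑ a ∈ Finset.range (k + 1), ((k+1).choose (a+1) : ℝ) * w.1 ^ (a+1) * w.2 ^ (k - a) * T (a+1) (k-a))
          + w.2 ^ (k+1) * T 0 (k+1) := by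
      rw [Finset.sum_range_succ']
      congr 1
      · exact Finset.sum_congr rfl fun a ha => by
          simp only [Finset.mem_range] at ha
          rw [show k + 1 - (a+1) = k - a from by omega]
      · simp
    rw [rhs_split]
    have pascal : ∀ a ∈ Finset.range (k+1), ((k+1).choose (a+1) : ℝ) * w.1 ^ (a+1) * w.2 ^ (k - a) * T (a+1) (k-a)
        = (k.choose a : ℝ) * w.1 ^ (a+1) * w.2 ^ (k - a) * T (a+1) (k-a)
          + (k.choose (a+1) : ℝ) * w.1 ^ (a+1) * w.2 ^ (k - a) * T (a+1) (k-a) := by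
      intro a _
      rw [Nat.choose_succ_succ k a]
      push_cast; ring
    rw [Finset.sum_congr rfl pascal, Finset.sum_add_distrib]
    have second : ∑ a ∈ Finset.range (k + 1), (k.choose a : ℝ) * w.1 ^ a * w.2 ^ (k - a + 1) * T a (k - a + 1)
        = (∑ a ∈ Finset.range (k + 1), (k.choose (a+1) : ℝ) * w.1 ^ (a+1) * w.2 ^ (k - a) * T (a+1) (k-a))
          + w.2 ^ (k+1) * T 0 (k+1) := by
      have X := Finset.sum_range_succ'
        (fun a => (k.choose a : ℝ) * w.1 ^ a * w.2 ^ (k + 1 - a) * T a (k + 1 - a)) (k+1)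
      have Y := Finset.sum_range_succ
        (fun a => (k.choose a : ℝ) * w.1 ^ a * w.2 ^ (k + 1 - a) * T a (k + 1 - a)) (k+1)
      have hzero : (k.choose (k+1) : ℝ) * w.1 ^ (k+1) * w.2 ^ (k + 1 - (k+1)) * T (k+1) (k + 1 - (k+1)) = 0 := by
        simp [Nat.choose_succ_self]
      calc ∑ a ∈ Finset.range (k + 1), (k.choose a : ℝ) * w.1 ^ a * w.2 ^ (k - a + 1) * T a (k - a + 1)
          = ∑ a ∈ Finset.range (k + 1), (k.choose a : ℝ) * w.1 ^ a * w.2 ^ (k + 1 - a) * T a (k + 1 - a) := by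
            refine Finset.sum_congr rfl fun a ha => ?_
            simp only [Finset.mem_range] at ha
            rw [show k + 1 - a = k - a + 1 from by omega]
        _ = ∑ a ∈ Finset.range (k + 2), (k.choose a : ℝ) * w.1 ^ a * w.2 ^ (k + 1 - a) * T a (k + 1 - a) := by
            rw [Y, hzero, add_zero]
        _ = (∑ a ∈ Finset.range (k + 1), (k.choose (a+1) : ℝ) * w.1 ^ (a+1) * w.2 ^ (k + 1 - (a+1)) * T (a+1) (k + 1 - (a+1)))
              + (k.choose 0 : ℝ) * w.1 ^ 0 * w.2 ^ (k + 1 - 0) * T 0 (k + 1 - 0) := X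
        _ = (∑ a ∈ Finset.range (k + 1), (k.choose (a+1) : ℝ) * w.1 ^ (a+1) * w.2 ^ (k - a) * T (a+1) (k-a))
              + w.2 ^ (k+1) * T 0 (k+1) := by
            congr 1
            · refine Finset.sum_congr rfl fun a ha => ?_
              simp only [Finset.mem_range] at ha
              rw [show k + 1 - (a+1) = k - a from by omega]
            · simp
    rw [second]
    ring



lemma line_deriv (q w : ℝ × ℝ) : ∀ (k : ℕ) (φ : ℝ × ℝ → ℝ), ContDiff ℝ (k : ℕ∞) φ →
    ∀ t : ℝ, iteratedDeriv k (fun s => φ (q + s • w)) t = (Dv w)^[k] φ (q + t • w) := by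
  intro k
  induction k with
  | zero => intro φ _ t; simp
  | succ k ih =>
    intro φ hφ t
    rw [iteratedDeriv_succ']
    have hder : deriv (fun s => φ (q + s • w)) = fun s : ℝ => Dv w φ (q + s • w) := by
      funext s
      have hline : HasDerivAt (fun s : ℝ => q + s • w) w s := by
        simpa using ((hasDerivAt_id s).smul_const w).const_add q
      have hphi : HasFDerivAt φ (fderiv ℝ φ (q + s • w)) (q + s • w) :=
        ((hφ.differentiable (by norm_cast)) _).hasFDerivAt
      have := hphi.comp_hasDerivAt s hline
      exact this.deriv
    rw [hder]
    have hDv : ContDiff ℝ (k : ℕ∞) (Dv w φ) := contDiff_Dv hφ w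
    rw [ih (Dv w φ) hDv t]
    rw [show (Dv w)^[k] (Dv w φ) = (Dv w)^[k+1] φ from
      (Function.iterate_succ_apply (Dv w) k φ).symm]

lemma slice_y : ∀ (b : ℕ) (φ : ℝ × ℝ → ℝ), ContDiff ℝ (b : ℕ∞) φ →
    ∀ s y, iteratedDeriv b (fun t => φ (s, t)) y = (Dv e2)^[b] φ (s, y) := by
  intro b
  induction b with
  | zero => intro φ _ s y; simp
  | succ b ih =>
    intro φ hφ s y
    rw [iteratedDeriv_succ']
    have hder : deriv (fun t => φ (s, t)) = fun t => Dv e2 φ (s, t) := by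
      funext t
      have hline : HasDerivAt (fun t : ℝ => ((s, t) : ℝ × ℝ)) e2 t :=
        (hasDerivAt_const t s).prodMk (hasDerivAt_id t)
      have hphi : HasFDerivAt φ (fderiv ℝ φ (s, t)) (s, t) :=
        ((hφ.differentiable (by norm_cast)) _).hasFDerivAt
      have := hphi.comp_hasDerivAt t hline
      exact this.deriv
    rw [hder, ih (Dv e2 φ) (contDiff_Dv hφ e2) s y,
      show (Dv e2)^[b] (Dv e2 φ) = (Dv e2)^[b+1] φ from
        (Function.iterate_succ_apply (Dv e2) b φ).symm]

lemma slice_x : ∀ (a : ℕ) (φ : ℝ × ℝ → ℝ), ContDiff ℝ (a : ℕ∞) φ →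
    ∀ s y, iteratedDeriv a (fun s => φ (s, y)) s = (Dv e1)^[a] φ (s, y) := by
  intro a
  induction a with
  | zero => intro φ _ s y; simp
  | succ a ih =>
    intro φ hφ s y
    rw [iteratedDeriv_succ']
    have hder : deriv (fun s => φ (s, y)) = fun s => Dv e1 φ (s, y) := by
      funext t
      have hline : HasDerivAt (fun t : ℝ => ((t, y) : ℝ × ℝ)) e1 t :=
        (hasDerivAt_id t).prodMk (hasDerivAt_const t y)
      have hphi : HasFDerivAt φ (fderiv ℝ φ (t, y)) (t, y) :=
        ((hφ.differentiable (by norm_cast)) _).hasFDerivAt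
      have := hphi.comp_hasDerivAt t hline
      exact this.deriv
    rw [hder, ih (Dv e1 φ) (contDiff_Dv hφ e1) s y,
      show (Dv e1)^[a] (Dv e1 φ) = (Dv e1)^[a+1] φ from
        (Function.iterate_succ_apply (Dv e1) a φ).symm]

lemma pd_eq {m : ℕ} (a b : ℕ) (φ : ℝ × ℝ → ℝ) (h : ContDiff ℝ (m : ℕ∞) φ) (hab : a + b ≤ m) :
    ∀ p, pd a b φ p = (Dv e1)^[a] ((Dv e2)^[b] φ) p := by
  intro p
  unfold pd
  have hb : ContDiff ℝ (b : ℕ∞) φ := h.of_le (by norm_cast; omega)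
  have inner : (fun s => iteratedDeriv b (fun t => φ (s, t)) p.2)
      = fun s => (Dv e2)^[b] φ (s, p.2) := funext fun s => slice_y b φ hb s p.2
  rw [inner]
  have ha : ContDiff ℝ (a : ℕ∞) ((Dv e2)^[b] φ) :=
    contDiff_iter e2 b a φ (h.of_le (by exact_mod_cast hab))
  exact slice_x a _ ha p.1 p.2



lemma iterW {g : ℝ → ℝ} {m : ℕ} (hg : ContDiff ℝ (m : ℕ∞) g) {k : ℕ} (hk : k ≤ m) {t : ℝ}
    (ht : t ∈ Set.Icc (0:ℝ) 1) : iteratedDerivWithin k g (Set.Icc 0 1) t = iteratedDeriv k g t := by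
  rw [iteratedDerivWithin_eq_iteratedFDerivWithin, iteratedDeriv_eq_iteratedFDeriv]
  congr 1
  have h := (contDiff_iff_ftaylorSeries.mp hg).hasFTaylorSeriesUpToOn (Set.Icc (0:ℝ) 1)
  exact (h.eq_iteratedFDerivWithin_of_uniqueDiffOn (by exact_mod_cast hk)
    (uniqueDiffOn_Icc one_pos) ht).symm

lemma taylor_est (n : ℕ) (φ : ℝ × ℝ → ℝ) (hφ : ContDiff ℝ ((n + 2 : ℕ) : ℕ∞) φ)
    (p w : ℝ × ℝ) (M B : ℝ)
    (hM : ∀ a b : ℕ, a + b = n + 2 → ∀ q, |pd a b φ q| ≤ M)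
    (hB : 0 ≤ B) (h1 : |w.1| ≤ B) (h2 : |w.2| ≤ B) :
    |φ (p + w) - ∑ k ∈ Finset.range (n + 2), (k.factorial : ℝ)⁻¹ *
        ∑ a ∈ Finset.range (k + 1), (k.choose a : ℝ) * w.1 ^ a * w.2 ^ (k - a) * pd a (k - a) φ p|
      ≤ (∑ a ∈ Finset.range (n + 3), ((n+2).choose a : ℝ)) / ((n+2).factorial : ℝ)
          * B ^ (n + 2) * M := by
  have hM0 : 0 ≤ M := le_trans (abs_nonneg _) (hM 0 (n+2) (by omega) p)
  set g : ℝ → ℝ := fun t => φ (p + t • w) with hgdef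
  have hline : ContDiff ℝ ((n + 2 : ℕ) : ℕ∞) (fun t : ℝ => p + t • w) :=
    contDiff_const.add (contDiff_id.smul contDiff_const)
  have hg : ContDiff ℝ ((n + 2 : ℕ) : ℕ∞) g := hφ.comp hline
  have hgOn : ContDiffOn ℝ ((n + 1 : ℕ) : ℕ∞) g (Set.Icc 0 1) :=
    (hg.of_le (by norm_cast; omega)).contDiffOn
  have hiter : ∀ k : ℕ, k ≤ n + 2 → ∀ t : ℝ, iteratedDeriv k g t = (Dv w)^[k] φ (p + t • w) :=
    fun k hk t => line_deriv p w k φ (hφ.of_le (by norm_cast)) t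
  have hdiffOn : DifferentiableOn ℝ (iteratedDerivWithin (n + 1) g (Set.Icc 0 1))
      (Set.Ioo 0 1) := by
    have hC1 : ContDiff ℝ (1 : ℕ∞) ((Dv w)^[n+1] φ) :=
      contDiff_iter w (n+1) 1 φ (hφ.of_le (by norm_cast; omega))
    have hdm : Differentiable ℝ (fun t : ℝ => (Dv w)^[n+1] φ (p + t • w)) :=
      (hC1.differentiable (by norm_num)).comp (hline.differentiable (by norm_cast))
    have : DifferentiableOn ℝ (iteratedDeriv (n+1) g) (Set.Ioo 0 1) := by
      have : iteratedDeriv (n+1) g = fun t => (Dv w)^[n+1] φ (p + t • w) :=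
        funext fun t => hiter (n+1) (by omega) t
      rw [this]; exact hdm.differentiableOn
    exact this.congr fun t ht => iterW hg (by omega) (Set.Ioo_subset_Icc_self ht)
  obtain ⟨ξ, hξ, heq⟩ := taylor_mean_remainder_lagrange (x₀ := 0) (x := 1) zero_ne_one
    (by rw [Set.uIcc_of_le zero_le_one]; exact hgOn)
    (by rw [Set.uIcc_of_le zero_le_one, Set.uIoo_of_le zero_le_one]; exact hdiffOn)
  rw [Set.uIcc_of_le zero_le_one] at heq
  rw [Set.uIoo_of_le zero_le_one] at hξ
  have hg1 : g 1 = φ (p + w) := by simp [hgdef]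
  have hzero : (0:ℝ) ∈ Set.Icc (0:ℝ) 1 := by constructor <;> norm_num
  have hpoly : taylorWithinEval g (n+1) (Set.Icc 0 1) 0 1
      = ∑ k ∈ Finset.range (n + 2), (k.factorial : ℝ)⁻¹ *
        ∑ a ∈ Finset.range (k + 1), (k.choose a : ℝ) * w.1 ^ a * w.2 ^ (k - a) * pd a (k - a) φ p := by
    rw [taylor_within_apply]
    refine Finset.sum_congr rfl fun k hk => ?_
    simp only [Finset.mem_range] at hk
    rw [iterW hg (by omega) hzero, hiter k (by omega) 0]
    simp only [zero_smul, add_zero, sub_zero, one_pow, mul_one, smul_eq_mul]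
    rw [expand w k (n+2) φ (by omega) hφ p]
    congr 1
    refine Finset.sum_congr rfl fun a ha => ?_
    simp only [Finset.mem_range] at ha
    rw [pd_eq a (k-a) φ hφ (by omega) p]
  have htop : iteratedDerivWithin (n + 1 + 1) g (Set.Icc 0 1) ξ
      = ∑ a ∈ Finset.range (n + 3), ((n+2).choose a : ℝ) * w.1 ^ a * w.2 ^ (n + 2 - a)
          * pd a (n + 2 - a) φ (p + ξ • w) := by
    rw [show n + 1 + 1 = n + 2 from rfl,
      iterW hg (le_refl _) (Set.Ioo_subset_Icc_self hξ), hiter (n+2) (le_refl _) ξ,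
      expand w (n+2) (n+2) φ (le_refl _) hφ (p + ξ • w)]
    refine Finset.sum_congr rfl fun a ha => ?_
    simp only [Finset.mem_range] at ha
    rw [pd_eq a (n+2-a) φ hφ (by omega) (p + ξ • w)]
  have hbound : |∑ a ∈ Finset.range (n + 3), ((n+2).choose a : ℝ) * w.1 ^ a * w.2 ^ (n + 2 - a)
      * pd a (n + 2 - a) φ (p + ξ • w)|
      ≤ (∑ a ∈ Finset.range (n + 3), ((n+2).choose a : ℝ)) * (B ^ (n + 2) * M) := by
    calc |∑ a ∈ Finset.range (n + 3), ((n+2).choose a : ℝ) * w.1 ^ a * w.2 ^ (n + 2 - a)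
        * pd a (n + 2 - a) φ (p + ξ • w)|
        ≤ ∑ a ∈ Finset.range (n + 3), |((n+2).choose a : ℝ) * w.1 ^ a * w.2 ^ (n + 2 - a)
          * pd a (n + 2 - a) φ (p + ξ • w)| := Finset.abs_sum_le_sum_abs _ _
      _ ≤ ∑ a ∈ Finset.range (n + 3), ((n+2).choose a : ℝ) * (B ^ (n + 2) * M) := by
          refine Finset.sum_le_sum fun a ha => ?_
          simp only [Finset.mem_range] at ha
          rw [abs_mul, abs_mul, abs_mul]
          have e1 : |w.1 ^ a| ≤ B ^ a := by
            rw [abs_pow]; exact pow_le_pow_left₀ (abs_nonneg _) h1 a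
          have e2 : |w.2 ^ (n + 2 - a)| ≤ B ^ (n + 2 - a) := by
            rw [abs_pow]; exact pow_le_pow_left₀ (abs_nonneg _) h2 _
          have e3 : |(((n+2).choose a : ℕ) : ℝ)| = ((n+2).choose a : ℝ) := by
            rw [abs_of_nonneg]; positivity
          rw [e3]
          have : |w.1 ^ a| * |w.2 ^ (n + 2 - a)| * |pd a (n + 2 - a) φ (p + ξ • w)|
              ≤ B ^ a * B ^ (n + 2 - a) * M := by
            have h4 := hM a (n+2-a) (by omega) (p + ξ • w)
            have := mul_le_mul (mul_le_mul e1 e2 (abs_nonneg _) (by positivity)) h4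
              (abs_nonneg _) (by positivity)
            exact this
          calc ((n+2).choose a : ℝ) * |w.1 ^ a| * |w.2 ^ (n + 2 - a)|
                * |pd a (n + 2 - a) φ (p + ξ • w)|
              = ((n+2).choose a : ℝ) * (|w.1 ^ a| * |w.2 ^ (n + 2 - a)|
                * |pd a (n + 2 - a) φ (p + ξ • w)|) := by ring
            _ ≤ ((n+2).choose a : ℝ) * (B ^ a * B ^ (n + 2 - a) * M) := by
                exact mul_le_mul_of_nonneg_left this (by positivity)
            _ = ((n+2).choose a : ℝ) * (B ^ (a + (n + 2 - a)) * M) := by rw [pow_add]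
            _ = ((n+2).choose a : ℝ) * (B ^ (n + 2) * M) := by
                rw [show a + (n + 2 - a) = n + 2 from by omega]
      _ = (∑ a ∈ Finset.range (n + 3), ((n+2).choose a : ℝ)) * (B ^ (n + 2) * M) := by
          rw [Finset.sum_mul]
  rw [hg1, hpoly] at heq
  rw [heq, htop, abs_div]
  have hfact : |((n + 1 + 1 : ℕ).factorial : ℝ)| = ((n+2).factorial : ℝ) :=
    abs_of_nonneg (by positivity)
  have hone : |(1 - 0 : ℝ) ^ (n + 1 + 1)| = 1 := by norm_num
  have hfpos : (0:ℝ) < ((n+2).factorial : ℝ) := by positivity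
  rw [hfact, abs_mul, hone, mul_one, div_le_iff₀ hfpos]
  calc |∑ a ∈ Finset.range (n + 3), ((n+2).choose a : ℝ) * w.1 ^ a * w.2 ^ (n + 2 - a)
      * pd a (n + 2 - a) φ (p + ξ • w)|
      ≤ (∑ a ∈ Finset.range (n + 3), ((n+2).choose a : ℝ)) * (B ^ (n + 2) * M) := hbound
    _ = (∑ a ∈ Finset.range (n + 3), ((n+2).choose a : ℝ)) / ((n+2).factorial : ℝ)
          * B ^ (n + 2) * M * ((n+2).factorial : ℝ) := by
        field_simp
end S10


open S10

/-- Pointwise consistency of the redistribution stencil: for a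
`C^{n+2}` function `φ` and a nonnegative stencil satisfying the moment
conditions up to order `n+1` with support in the annulus `[rh, Rh]`, the
stencil approximates the Laplacian to order `h^n`. -/
theorem stmt_10 {N : ℕ} (n : ℕ) (hn : n = 1 ∨ n = 2)
    (x : Fin N → ℝ × ℝ) (f : Fin N → Fin N → ℝ) (i : Fin N)
    (r R h : ℝ) (hr : 0 < r) (hR : 0 < R) (hh : 0 < h)
    (φ : ℝ × ℝ → ℝ) (hφ : ContDiff ℝ (n + 2 : ℕ) φ)
    (M : ℝ) (hM : ∀ a b : ℕ, a + b = n + 2 → ∀ p, |pd a b φ p| ≤ M)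
    (hmom : ∀ a b : ℕ, a + b ≤ n + 1 → a + b ≠ 2 →
      ∑ j, f i j * ((x j).1 - (x i).1)^a * ((x j).2 - (x i).2)^b = 0)
    (hxx : ∑ j, f i j * ((x j).1 - (x i).1)^2 = 2)
    (hyy : ∑ j, f i j * ((x j).2 - (x i).2)^2 = 2)
    (hxy : ∑ j, f i j * (((x j).1 - (x i).1) * ((x j).2 - (x i).2)) = 0)
    (hnonneg : ∀ j, j ≠ i → 0 ≤ f i j)
    (hsupp : ∀ j, j ≠ i → f i j ≠ 0 →
      r * h ≤ Real.sqrt (((x j).1 - (x i).1)^2 + ((x j).2 - (x i).2)^2) ∧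
      Real.sqrt (((x j).1 - (x i).1)^2 + ((x j).2 - (x i).2)^2) ≤ R * h) :
    |(pd 2 0 φ (x i) + pd 0 2 φ (x i)) - ∑ j, f i j * φ (x j)| ≤
      4 * (∑ a ∈ Finset.range (n + 3),
            1 / ((a.factorial : ℝ) * ((n + 2 - a).factorial))) *
        ((R * h)^(n + 2) / (r * h)^2) * M := by
  have hM0 : 0 ≤ M := le_trans (abs_nonneg _) (hM 0 (n+2) (by omega) (x i))
  set u : Fin N → ℝ := fun j => (x j).1 - (x i).1 with hu
  set v : Fin N → ℝ := fun j => (x j).2 - (x i).2 with hv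
  set P : Fin N → ℝ := fun j => ∑ k ∈ Finset.range (n + 2), (k.factorial : ℝ)⁻¹ *
      ∑ a ∈ Finset.range (k + 1), (k.choose a : ℝ) * (u j) ^ a * (v j) ^ (k - a)
        * pd a (k - a) φ (x i) with hP
  set Cs : ℝ := ∑ a ∈ Finset.range (n + 3),
      1 / ((a.factorial : ℝ) * ((n + 2 - a).factorial)) with hCs
  have hCs0 : 0 ≤ Cs := Finset.sum_nonneg fun a _ => by positivity
  -- the statement constant equals the binomial constant
  have hCeq : (∑ a ∈ Finset.range (n + 3), ((n+2).choose a : ℝ)) / ((n+2).factorial : ℝ)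
      = Cs := by
    rw [Finset.sum_div]
    refine Finset.sum_congr rfl fun a ha => ?_
    simp only [Finset.mem_range] at ha
    have hc := Nat.choose_mul_factorial_mul_factorial (show a ≤ n + 2 by omega)
    rw [div_eq_div_iff (by positivity) (by positivity), one_mul]
    have hc' : (n+2).choose a * (a.factorial * (n + 2 - a).factorial) = (n+2).factorial := by
      rw [← mul_assoc]; exact hc
    exact_mod_cast hc'
  -- Taylor estimate for each stencil point
  have hB : (0:ℝ) ≤ R * h := by positivity
  have hest : ∀ j, j ≠ i → f i j ≠ 0 →
      |φ (x j) - P j| ≤ Cs * (R * h) ^ (n + 2) * M := by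
    intro j hj hfj
    obtain ⟨_, h2⟩ := hsupp j hj hfj
    have h2' : Real.sqrt ((u j)^2 + (v j)^2) ≤ R * h := by simpa [hu, hv] using h2
    have hs0 : (0:ℝ) ≤ (u j)^2 + (v j)^2 := by positivity
    have h1u : |u j| ≤ R * h := by
      rw [← Real.sqrt_sq_eq_abs]
      exact le_trans (Real.sqrt_le_sqrt (by nlinarith [sq_nonneg (v j)])) h2'
    have h1v : |v j| ≤ R * h := by
      rw [← Real.sqrt_sq_eq_abs]
      exact le_trans (Real.sqrt_le_sqrt (by nlinarith [sq_nonneg (u j)])) h2'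
    have hxj : x j = x i + (u j, v j) := by
      ext <;> simp [hu, hv]
    have := taylor_est n φ hφ (x i) (u j, v j) M (R * h) hM hB h1u h1v
    rw [← hxj] at this
    rw [hCeq] at this
    exact this
  -- P i = φ (x i)
  have hPi : P i = φ (x i) := by
    have hu0 : u i = 0 := by simp [hu]
    have hv0 : v i = 0 := by simp [hv]
    rw [hP]
    simp only [hu0, hv0]
    rw [Finset.sum_eq_single_of_mem 0 (by simp)]
    · simp [pd]
    · intro k _ hk
      have : ∀ a ∈ Finset.range (k + 1),
          (k.choose a : ℝ) * (0:ℝ) ^ a * (0:ℝ) ^ (k - a) * pd a (k - a) φ (x i) = 0 := by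
        intro a ha
        simp only [Finset.mem_range] at ha
        rcases Nat.eq_zero_or_pos a with rfl | hapos
        · rw [zero_pow (show k - 0 ≠ 0 by omega)]; ring
        · rw [zero_pow (show a ≠ 0 by omega)]; ring
      rw [Finset.sum_congr rfl this]
      simp
  -- moment computation
  set S : ℕ → ℕ → ℝ := fun a b => ∑ j, f i j * (u j) ^ a * (v j) ^ b with hSdef
  have key : ∑ j, f i j * P j = ∑ k ∈ Finset.range (n + 2), (k.factorial : ℝ)⁻¹ *
      ∑ a ∈ Finset.range (k + 1), (k.choose a : ℝ) * pd a (k - a) φ (x i) * S a (k - a) := by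
    rw [hP, hSdef]
    simp only [Finset.mul_sum]
    rw [Finset.sum_comm]
    refine Finset.sum_congr rfl fun k _ => ?_
    rw [Finset.sum_comm]
    refine Finset.sum_congr rfl fun a _ => ?_
    refine Finset.sum_congr rfl fun j _ => ?_
    ring
  have hS20 : S 2 0 = 2 := by
    rw [hSdef, ← hxx]
    exact Finset.sum_congr rfl fun j _ => by simp [hu]
  have hS02 : S 0 2 = 2 := by
    rw [hSdef, ← hyy]
    exact Finset.sum_congr rfl fun j _ => by ring
  have hS11 : S 1 1 = 0 := by
    rw [hSdef, ← hxy]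
    exact Finset.sum_congr rfl fun j _ => by ring
  have hSmom : ∀ a b : ℕ, a + b ≤ n + 1 → a + b ≠ 2 → S a b = 0 := fun a b h1 h2 => by
    rw [hSdef, ← hmom a b h1 h2]
  have hmoment : ∑ j, f i j * P j = pd 2 0 φ (x i) + pd 0 2 φ (x i) := by
    rw [key]
    rcases hn with rfl | rfl
    · simp only [Finset.sum_range_succ, Finset.sum_range_zero]
      rw [hSmom 0 0 (by omega) (by omega), hSmom 0 1 (by omega) (by omega),
        hSmom 1 0 (by omega) (by omega), hS20, hS02, hS11]
      norm_num [Nat.choose, Nat.factorial]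
      ring
    · simp only [Finset.sum_range_succ, Finset.sum_range_zero]
      rw [hSmom 0 0 (by omega) (by omega), hSmom 0 1 (by omega) (by omega),
        hSmom 1 0 (by omega) (by omega), hS20, hS02, hS11,
        hSmom 0 3 (by omega) (by omega), hSmom 1 2 (by omega) (by omega),
        hSmom 2 1 (by omega) (by omega), hSmom 3 0 (by omega) (by omega)]
      norm_num [Nat.choose, Nat.factorial]
      ring
  -- sum of stencil weights
  have hrh2 : (0:ℝ) < (r * h)^2 := by positivity
  have hwsum : ∑ j ∈ Finset.univ.erase i, f i j ≤ 4 / (r * h)^2 := by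
    rw [le_div_iff₀ hrh2]
    have h4 : ∑ j, (f i j * (u j)^2 + f i j * (v j)^2) = 4 := by
      rw [Finset.sum_add_distrib, hxx, hyy]; norm_num
    have hterm : ∀ j ∈ Finset.univ.erase i, f i j * (r * h)^2
        ≤ f i j * (u j)^2 + f i j * (v j)^2 := by
      intro j hj
      have hj' : j ≠ i := Finset.ne_of_mem_erase hj
      rcases eq_or_ne (f i j) 0 with hf0 | hf0
      · simp [hf0]
      · obtain ⟨hlo, _⟩ := hsupp j hj' hf0
        have hlo' : r * h ≤ Real.sqrt ((u j)^2 + (v j)^2) := by simpa [hu, hv] using hlo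
        have hs0 : (0:ℝ) ≤ (u j)^2 + (v j)^2 := by positivity
        have : (r * h)^2 ≤ (u j)^2 + (v j)^2 := by
          have hss := Real.sq_sqrt hs0
          nlinarith [Real.sqrt_nonneg ((u j)^2 + (v j)^2), mul_pos hr hh]
        have hfnn := hnonneg j hj'
        nlinarith
    calc (∑ j ∈ Finset.univ.erase i, f i j) * (r * h)^2
        = ∑ j ∈ Finset.univ.erase i, f i j * (r * h)^2 := by rw [Finset.sum_mul]
      _ ≤ ∑ j ∈ Finset.univ.erase i, (f i j * (u j)^2 + f i j * (v j)^2) :=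
          Finset.sum_le_sum hterm
      _ ≤ ∑ j, (f i j * (u j)^2 + f i j * (v j)^2) := by
          refine Finset.sum_le_sum_of_subset_of_nonneg (Finset.erase_subset _ _) ?_
          intro j _ hj
          simp only [Finset.mem_erase, Finset.mem_univ, and_true, not_not] at hj
          have : u j = 0 := by simp [hu, hj]
          have hv0 : v j = 0 := by simp [hv, hj]
          rw [this, hv0]; norm_num
      _ = 4 := h4
  -- assemble
  have hsplit : (pd 2 0 φ (x i) + pd 0 2 φ (x i)) - ∑ j, f i j * φ (x j)
      = ∑ j ∈ Finset.univ.erase i, f i j * (P j - φ (x j)) := by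
    rw [← hmoment]
    rw [← Finset.sum_sub_distrib]
    have : ∀ j, f i j * P j - f i j * φ (x j) = f i j * (P j - φ (x j)) := fun j => by ring
    simp_rw [this]
    rw [← Finset.sum_erase_add _ _ (Finset.mem_univ i), hPi]
    simp
  rw [hsplit]
  have hbnd : |∑ j ∈ Finset.univ.erase i, f i j * (P j - φ (x j))|
      ≤ (∑ j ∈ Finset.univ.erase i, f i j) * (Cs * (R * h) ^ (n + 2) * M) := by
    calc |∑ j ∈ Finset.univ.erase i, f i j * (P j - φ (x j))|
        ≤ ∑ j ∈ Finset.univ.erase i, |f i j * (P j - φ (x j))| :=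
          Finset.abs_sum_le_sum_abs _ _
      _ ≤ ∑ j ∈ Finset.univ.erase i, f i j * (Cs * (R * h) ^ (n + 2) * M) := by
          refine Finset.sum_le_sum fun j hj => ?_
          have hj' : j ≠ i := Finset.ne_of_mem_erase hj
          rcases eq_or_ne (f i j) 0 with hf0 | hf0
          · simp [hf0]
          · rw [abs_mul, abs_of_nonneg (hnonneg j hj')]
            refine mul_le_mul_of_nonneg_left ?_ (hnonneg j hj')
            rw [abs_sub_comm]
            exact hest j hj' hf0
      _ = (∑ j ∈ Finset.univ.erase i, f i j) * (Cs * (R * h) ^ (n + 2) * M) :=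
          (Finset.sum_mul _ _ _).symm
  refine le_trans hbnd ?_
  have hfac : (0:ℝ) ≤ Cs * (R * h) ^ (n + 2) * M :=
    mul_nonneg (mul_nonneg hCs0 (pow_nonneg hB _)) hM0
  calc (∑ j ∈ Finset.univ.erase i, f i j) * (Cs * (R * h) ^ (n + 2) * M)
      ≤ (4 / (r * h)^2) * (Cs * (R * h) ^ (n + 2) * M) :=
        mul_le_mul_of_nonneg_right hwsum hfac
    _ = 4 * Cs * ((R * h)^(n + 2) / (r * h)^2) * M := by ring
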